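/- Let K ≥ 1 and for each k ∈ {1,…,K} let 𝒴_k and 𝒰_k be finite nonempty types. Let (Y_1,…,Y_K,U_1,…,U_K) be random variables on a finite probability space whose joint probability mass function factorizes as P(Y = y, U = u) = P(Y = y) · Π_{k=1}^K r_k(u_k | y_k), where Y = (Y_1,…,Y_K), U = (U_1,…,U_K), and each r_k(·|y_k) is a probability mass function on 𝒰_k (i.e., conditionally on Y_k, U_k is independent of everything else). Then for all subsets B ⊆ A ⊆ {1,…,K}: I(Y^A; U^A) = I(Y^{A∖B}; U^{A∖B} | U^B) + I(Y^B; U^B), where Y^S denotes the tuple (Y_k)_{k∈S} and similarly for U^S. -/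

import Mathlib

open scoped Classical

/-- Probability mass `P(f = a)` of the value `a` under the random variable `f` on a
finite space with probability mass function `p`. -/
noncomputable def pmfOf {Ω α : Type*} [Fintype Ω] (p : Ω → ℝ) (f : Ω → α) (a : α) : ℝ :=
  ∑ ω, if f ω = a then p ω else 0

/-- Shannon entropy (natural logarithm) `H(f) = -∑ₐ P(f = a) log P(f = a)` of a random
variable `f` with finitely many values; the convention `0 · log 0 = 0` holds since
`Real.log 0 = 0`. -/
noncomputable def entropyOf {Ω α : Type*} [Fintype Ω] [Fintype α]
    (p : Ω → ℝ) (f : Ω → α) : ℝ :=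
  -∑ a, pmfOf p f a * Real.log (pmfOf p f a)

/-- Mutual information `I(f; g) = H(f) + H(g) - H(f, g)`. -/
noncomputable def miOf {Ω α β : Type*} [Fintype Ω] [Fintype α] [Fintype β]
    (p : Ω → ℝ) (f : Ω → α) (g : Ω → β) : ℝ :=
  entropyOf p f + entropyOf p g - entropyOf p (fun ω => (f ω, g ω))

/-- Conditional mutual information
`I(f; g | h) = H(f, h) + H(g, h) - H(f, g, h) - H(h)`. -/
noncomputable def cmiOf {Ω α β γ : Type*} [Fintype Ω] [Fintype α] [Fintype β] [Fintype γ]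
    (p : Ω → ℝ) (f : Ω → α) (g : Ω → β) (h : Ω → γ) : ℝ :=
  entropyOf p (fun ω => (f ω, h ω)) + entropyOf p (fun ω => (g ω, h ω))
    - entropyOf p (fun ω => (f ω, g ω, h ω)) - entropyOf p h

lemma sum_pi_prod {ι : Type*} [Fintype ι] [DecidableEq ι] (𝒱 : ι → Type*) [∀ i, Fintype (𝒱 i)]
    (f : ∀ i, 𝒱 i → ℝ) : ∑ b : ∀ i, 𝒱 i, ∏ i, f i (b i) = ∏ i, ∑ v, f i v := by
  classical
  rw [Finset.prod_univ_sum, Fintype.piFinset_univ]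

lemma prod_subtype_eq_prod_finset {κ : Type*} (S : Finset κ) {M : Type*} [CommMonoid M]
    (f : {x // x ∈ S} → M) (g : κ → M) (hfg : ∀ k : {x // x ∈ S}, f k = g k.1) :
    ∏ k : {x // x ∈ S}, f k = ∏ k ∈ S, g k := by
  rw [← Finset.prod_coe_sort S g]
  exact Finset.prod_congr rfl fun k _ => hfg k

lemma rInnerSum {K : ℕ} {𝒴 𝒰 : Fin K → Type*} [∀ k, Fintype (𝒰 k)]
    (r : ∀ k, 𝒰 k → 𝒴 k → ℝ) (hr1 : ∀ k y, ∑ u, r k u y = 1)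
    (y : ∀ k, 𝒴 k) (T : Finset (Fin K)) (b : ∀ k : {x // x ∈ T}, 𝒰 k) :
    ∑ u : ∀ k, 𝒰 k, (if (fun k : {x // x ∈ T} => u k) = b then ∏ k, r k (u k) (y k) else 0)
      = ∏ k : {x // x ∈ T}, r k (b k) (y k.1) := by
  classical
  set g : ∀ k, 𝒰 k → ℝ :=
    fun k v => if h : k ∈ T then (if v = b ⟨k, h⟩ then r k v (y k) else 0)
      else r k v (y k) with hg
  have step1 : ∀ u : ∀ k, 𝒰 k,
      (if (fun k : {x // x ∈ T} => u k) = b then ∏ k, r k (u k) (y k) else 0)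
        = ∏ k, g k (u k) := by
    intro u
    by_cases h : (fun k : {x // x ∈ T} => u k) = b
    · rw [if_pos h]
      refine Finset.prod_congr rfl fun k _ => ?_
      by_cases hk : k ∈ T
      · have : u k = b ⟨k, hk⟩ := congrFun h ⟨k, hk⟩
        simp [hg, hk, this]
      · simp [hg, hk]
    · rw [if_neg h]
      obtain ⟨k', hk'⟩ : ∃ k' : {x // x ∈ T}, u k' ≠ b k' := by
        by_contra hc
        push_neg at hc
        exact h (funext hc)
      symm
      refine Finset.prod_eq_zero (Finset.mem_univ (k' : Fin K)) ?_
      have : (⟨(k' : Fin K), k'.2⟩ : {x // x ∈ T}) = k' := rfl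
      simp [hg, k'.2, this, hk']
  have step3 : ∀ k, (∑ v, g k v) = if h : k ∈ T then r k (b ⟨k, h⟩) (y k) else 1 := by
    intro k
    by_cases hk : k ∈ T
    · simp only [hg, dif_pos hk]
      rw [Finset.sum_ite_eq' Finset.univ (b ⟨k, hk⟩) (fun v => r k v (y k))]
      simp
    · simp only [hg, dif_neg hk]
      exact hr1 k (y k)
  calc ∑ u : ∀ k, 𝒰 k, (if (fun k : {x // x ∈ T} => u k) = b then ∏ k, r k (u k) (y k) else 0)
      = ∑ u : ∀ k, 𝒰 k, ∏ k, g k (u k) := Finset.sum_congr rfl (fun u _ => step1 u)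
    _ = ∏ k, ∑ v, g k v := sum_pi_prod 𝒰 g
    _ = ∏ k, (if h : k ∈ T then r k (b ⟨k, h⟩) (y k) else 1) :=
        Finset.prod_congr rfl (fun k _ => step3 k)
    _ = ∏ k ∈ T, (if h : k ∈ T then r k (b ⟨k, h⟩) (y k) else 1) :=
        (Finset.prod_subset (Finset.subset_univ T) (fun k _ hk => dif_neg hk)).symm
    _ = ∏ k : {x // x ∈ T}, r k (b k) (y k.1) :=
        (prod_subtype_eq_prod_finset T _ _ (fun k => by rw [dif_pos k.2])).symm

lemma pmfOf_comp' {Ω α β : Type*} [Fintype Ω] [Fintype α] (p : Ω → ℝ)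
    (f : Ω → α) (h : α → β) (b : β) :
    pmfOf p (fun ω => h (f ω)) b = ∑ a, if h a = b then pmfOf p f a else 0 := by
  classical
  unfold pmfOf
  symm
  calc ∑ a, (if h a = b then ∑ ω, if f ω = a then p ω else 0 else 0)
      = ∑ a, ∑ ω, (if f ω = a then (if h a = b then p ω else 0) else 0) := by
        refine Finset.sum_congr rfl fun a _ => ?_
        split
        · refine Finset.sum_congr rfl fun ω _ => ?_; split <;> simp_all
        · symm; refine Finset.sum_eq_zero fun ω _ => ?_; split <;> simp_all
    _ = ∑ ω, ∑ a, (if f ω = a then (if h a = b then p ω else 0) else 0) := Finset.sum_comm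
    _ = ∑ ω, (if h (f ω) = b then p ω else 0) := by
        refine Finset.sum_congr rfl fun ω _ => ?_
        rw [Finset.sum_ite_eq Finset.univ (f ω) (fun a => if h a = b then p ω else 0)]
        simp

lemma ite_inst {c : Prop} {h1 h2 : Decidable c} (x y : ℝ) :
    @ite _ c h1 x y = @ite _ c h2 x y := by
  cases h1 <;> cases h2 <;> simp_all

lemma pmfOf_comp'' {Ω α β : Type*} [Fintype Ω] [Fintype α] (p : Ω → ℝ)
    (f : Ω → α) (h : α → β) (b : β) [inst : ∀ a : α, Decidable (h a = b)] :
    pmfOf p (fun ω => h (f ω)) b = ∑ a, if h a = b then pmfOf p f a else 0 := by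
  rw [pmfOf_comp' p f h b]
  exact Finset.sum_congr rfl fun a _ => ite_inst _ _

lemma keyP {Ω : Type*} [Fintype Ω] {K : ℕ} {𝒴 𝒰 : Fin K → Type*}
    [∀ k, Fintype (𝒴 k)] [∀ k, Fintype (𝒰 k)]
    (p : Ω → ℝ) (Y : ∀ k, Ω → 𝒴 k) (U : ∀ k, Ω → 𝒰 k) (r : ∀ k, 𝒰 k → 𝒴 k → ℝ)
    (hr1 : ∀ k y, ∑ u, r k u y = 1)
    (hfact : ∀ (y : ∀ k, 𝒴 k) (u : ∀ k, 𝒰 k),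
      pmfOf p (fun ω => ((fun k => Y k ω), (fun k => U k ω))) (y, u)
        = pmfOf p (fun ω => fun k => Y k ω) y * ∏ k, r k (u k) (y k))
    (S T : Finset (Fin K)) (a : ∀ k : {x // x ∈ S}, 𝒴 k) (b : ∀ k : {x // x ∈ T}, 𝒰 k) :
    pmfOf p (fun ω => ((fun k : {x // x ∈ S} => Y k ω), (fun k : {x // x ∈ T} => U k ω))) (a, b)
      = ∑ y : ∀ k, 𝒴 k, (if (fun k : {x // x ∈ S} => y k) = a
          then pmfOf p (fun ω => fun k => Y k ω) y * ∏ k : {x // x ∈ T}, r k (b k) (y k.1)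
          else 0) := by
  classical
  refine Eq.trans (pmfOf_comp' p (fun ω => ((fun k => Y k ω), (fun k => U k ω)))
      (fun x => ((fun k : {v // v ∈ S} => x.1 k), (fun k : {v // v ∈ T} => x.2 k))) (a, b)) ?_
  rw [Fintype.sum_prod_type]
  refine Finset.sum_congr rfl fun y _ => ?_
  by_cases hy : (fun k : {v // v ∈ S} => y k) = a
  · rw [if_pos hy, ← rInnerSum r hr1 y T b, Finset.mul_sum]
    refine Finset.sum_congr rfl fun u _ => ?_
    by_cases hu : (fun k : {v // v ∈ T} => u k) = b
    · rw [if_pos hu, if_pos (Prod.ext hy hu), hfact y u]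
    · rw [if_neg hu, if_neg (fun hc => hu (congrArg Prod.snd hc)), mul_zero]
  · rw [if_neg hy]
    refine Finset.sum_eq_zero fun u _ => ?_
    exact if_neg (fun hc => hy (congrArg Prod.fst hc))

lemma keyP' {Ω : Type*} [Fintype Ω] {K : ℕ} {𝒴 𝒰 : Fin K → Type*}
    [∀ k, Fintype (𝒴 k)] [∀ k, Fintype (𝒰 k)]
    (p : Ω → ℝ) (Y : ∀ k, Ω → 𝒴 k) (U : ∀ k, Ω → 𝒰 k) (r : ∀ k, 𝒰 k → 𝒴 k → ℝ)
    (hr1 : ∀ k y, ∑ u, r k u y = 1)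
    (hfact : ∀ (y : ∀ k, 𝒴 k) (u : ∀ k, 𝒰 k),
      pmfOf p (fun ω => ((fun k => Y k ω), (fun k => U k ω))) (y, u)
        = pmfOf p (fun ω => fun k => Y k ω) y * ∏ k, r k (u k) (y k))
    (S T : Finset (Fin K)) (hTS : T ⊆ S)
    (a : ∀ k : {x // x ∈ S}, 𝒴 k) (b : ∀ k : {x // x ∈ T}, 𝒰 k) :
    pmfOf p (fun ω => ((fun k : {x // x ∈ S} => Y k ω), (fun k : {x // x ∈ T} => U k ω))) (a, b)
      = pmfOf p (fun ω => fun k : {x // x ∈ S} => Y k ω) a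
          * ∏ k : {x // x ∈ T}, r k (b k) (a ⟨k.1, hTS k.2⟩) := by
  classical
  rw [keyP p Y U r hr1 hfact S T a b]
  have hm : pmfOf p (fun ω => fun k : {x // x ∈ S} => Y k ω) a
      = ∑ y : ∀ k, 𝒴 k, (if (fun k : {x // x ∈ S} => y k) = a
          then pmfOf p (fun ω => fun k => Y k ω) y else 0) :=
    pmfOf_comp'' p (fun ω => fun k => Y k ω) (fun y (k : {x // x ∈ S}) => y k) a
  rw [hm, Finset.sum_mul]
  refine Finset.sum_congr rfl fun y _ => ?_
  by_cases hy : (fun k : {x // x ∈ S} => y k) = a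
  · rw [if_pos hy, if_pos hy]
    congr 1
    refine Finset.prod_congr rfl fun k _ => ?_
    rw [← congrFun hy ⟨k.1, hTS k.2⟩]
  · rw [if_neg hy, if_neg hy, zero_mul]

lemma keyP2 {Ω : Type*} [Fintype Ω] {K : ℕ} {𝒴 𝒰 : Fin K → Type*}
    [∀ k, Fintype (𝒴 k)] [∀ k, Fintype (𝒰 k)]
    (p : Ω → ℝ) (Y : ∀ k, Ω → 𝒴 k) (U : ∀ k, Ω → 𝒰 k) (r : ∀ k, 𝒰 k → 𝒴 k → ℝ)
    (hr1 : ∀ k y, ∑ u, r k u y = 1)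
    (hfact : ∀ (y : ∀ k, 𝒴 k) (u : ∀ k, 𝒰 k),
      pmfOf p (fun ω => ((fun k => Y k ω), (fun k => U k ω))) (y, u)
        = pmfOf p (fun ω => fun k => Y k ω) y * ∏ k, r k (u k) (y k))
    (S T1 T2 : Finset (Fin K)) (hT1S : T1 ⊆ S) (hdisj : Disjoint T1 T2)
    (a : ∀ k : {x // x ∈ S}, 𝒴 k) (c : ∀ k : {x // x ∈ T2}, 𝒰 k)
    (b : ∀ k : {x // x ∈ T1}, 𝒰 k) :
    pmfOf p (fun ω => (((fun k : {x // x ∈ S} => Y k ω), (fun k : {x // x ∈ T2} => U k ω)),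
        (fun k : {x // x ∈ T1} => U k ω))) ((a, c), b)
      = pmfOf p (fun ω => ((fun k : {x // x ∈ S} => Y k ω),
            (fun k : {x // x ∈ T2} => U k ω))) (a, c)
          * ∏ k : {x // x ∈ T1}, r k (b k) (a ⟨k.1, hT1S k.2⟩) := by
  classical
  set comb : ∀ k : {x // x ∈ T1 ∪ T2}, 𝒰 k := fun k =>
    if h : k.1 ∈ T1 then b ⟨k.1, h⟩
    else c ⟨k.1, (Finset.mem_union.mp k.2).resolve_left h⟩ with hcomb
  have step0 : pmfOf p (fun ω => (((fun k : {x // x ∈ S} => Y k ω),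
        (fun k : {x // x ∈ T2} => U k ω)), (fun k : {x // x ∈ T1} => U k ω))) ((a, c), b)
      = pmfOf p (fun ω => ((fun k : {x // x ∈ S} => Y k ω),
          (fun k : {x // x ∈ T1 ∪ T2} => U k ω))) (a, comb) := by
    unfold pmfOf
    refine Finset.sum_congr rfl fun ω _ => ?_
    have hiff : ((((fun k : {x // x ∈ S} => Y k ω), (fun k : {x // x ∈ T2} => U k ω)),
          (fun k : {x // x ∈ T1} => U k ω)) = ((a, c), b))
        ↔ (((fun k : {x // x ∈ S} => Y k ω), (fun k : {x // x ∈ T1 ∪ T2} => U k ω))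
            = (a, comb)) := by
      constructor
      · intro h
        have h1 : (fun k : {x // x ∈ S} => Y k ω) = a :=
          congrArg Prod.fst (congrArg Prod.fst h)
        have h2 : (fun k : {x // x ∈ T2} => U k ω) = c :=
          congrArg Prod.snd (congrArg Prod.fst h)
        have h3 : (fun k : {x // x ∈ T1} => U k ω) = b := congrArg Prod.snd h
        refine Prod.ext h1 (funext fun k => ?_)
        show U k.1 ω = comb k
        by_cases hk : k.1 ∈ T1
        · rw [hcomb]
          simp only [dif_pos hk]
          exact congrFun h3 ⟨k.1, hk⟩
        · rw [hcomb]
          simp only [dif_neg hk]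
          exact congrFun h2 ⟨k.1, (Finset.mem_union.mp k.2).resolve_left hk⟩
      · intro h
        have h1 : (fun k : {x // x ∈ S} => Y k ω) = a := congrArg Prod.fst h
        have h2 : (fun k : {x // x ∈ T1 ∪ T2} => U k ω) = comb := congrArg Prod.snd h
        refine Prod.ext (Prod.ext h1 (funext fun k => ?_)) (funext fun k => ?_)
        · have hk1 : k.1 ∉ T1 := Finset.disjoint_right.mp hdisj k.2
          have hh := congrFun h2 ⟨k.1, Finset.mem_union_right T1 k.2⟩
          rw [hcomb] at hh
          simp only [dif_neg hk1] at hh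
          exact hh
        · have hh := congrFun h2 ⟨k.1, Finset.mem_union_left T2 k.2⟩
          rw [hcomb] at hh
          simp only [dif_pos k.2] at hh
          exact hh
    by_cases hc : ((((fun k : {x // x ∈ S} => Y k ω), (fun k : {x // x ∈ T2} => U k ω)),
          (fun k : {x // x ∈ T1} => U k ω)) = ((a, c), b))
    · rw [if_pos hc, if_pos (hiff.mp hc)]
    · rw [if_neg hc, if_neg (fun hx => hc (hiff.mpr hx))]
  rw [step0, keyP p Y U r hr1 hfact S (T1 ∪ T2) a comb,
    keyP p Y U r hr1 hfact S T2 a c, Finset.sum_mul]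
  refine Finset.sum_congr rfl fun y _ => ?_
  by_cases hy : (fun k : {x // x ∈ S} => y k) = a
  · rw [if_pos hy, if_pos hy]
    have e0 : (∏ k : {x // x ∈ T1 ∪ T2}, r k (comb k) (y k.1))
        = ∏ k ∈ T1 ∪ T2,
            (if h : k ∈ T1 ∪ T2 then r k (comb ⟨k, h⟩) (y k) else 1) :=
      prod_subtype_eq_prod_finset _ _ _ (fun k => by rw [dif_pos k.2])
    have e1 : (∏ k ∈ T1, (if h : k ∈ T1 ∪ T2 then r k (comb ⟨k, h⟩) (y k) else 1))
        = ∏ k : {x // x ∈ T1}, r k (b k) (a ⟨k.1, hT1S k.2⟩) := by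
      refine (prod_subtype_eq_prod_finset T1 _ _ (fun k => ?_)).symm
      have hky : y k.1 = a ⟨k.1, hT1S k.2⟩ := congrFun hy ⟨k.1, hT1S k.2⟩
      simp [hcomb, k.2, Finset.mem_union, hky]
    have e2 : (∏ k ∈ T2, (if h : k ∈ T1 ∪ T2 then r k (comb ⟨k, h⟩) (y k) else 1))
        = ∏ k : {x // x ∈ T2}, r k (c k) (y k.1) := by
      refine (prod_subtype_eq_prod_finset T2 _ _ (fun k => ?_)).symm
      have hk1 : k.1 ∉ T1 := Finset.disjoint_right.mp hdisj k.2
      simp [hcomb, k.2, hk1, Finset.mem_union]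
    rw [e0, Finset.prod_union hdisj, e1, e2]
    ring
  · rw [if_neg hy, if_neg hy, zero_mul]

lemma sum_pmfOf_mul {Ω α : Type*} [Fintype Ω] [Fintype α] (p : Ω → ℝ)
    (f : Ω → α) (G : α → ℝ) :
    ∑ a, pmfOf p f a * G a = ∑ ω, p ω * G (f ω) := by
  classical
  unfold pmfOf
  simp only [Finset.sum_mul, ite_mul, zero_mul]
  rw [Finset.sum_comm]
  refine Finset.sum_congr rfl fun ω _ => ?_
  rw [Finset.sum_ite_eq Finset.univ (f ω) (fun a => p ω * G a)]
  simp

lemma entropyOf_comp_injective {Ω α β : Type*} [Fintype Ω] [Fintype α] [Fintype β]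
    (p : Ω → ℝ) (f : Ω → α) (e : α → β) (he : Function.Injective e) :
    entropyOf p (fun ω => e (f ω)) = entropyOf p f := by
  classical
  have key : ∀ a, pmfOf p (fun ω => e (f ω)) (e a) = pmfOf p f a := by
    intro a; unfold pmfOf
    refine Finset.sum_congr rfl fun ω _ => ?_
    simp [he.eq_iff]
  have hz : ∀ b, b ∉ Finset.univ.image e → pmfOf p (fun ω => e (f ω)) b = 0 := by
    intro b hb; unfold pmfOf
    refine Finset.sum_eq_zero fun ω _ => ?_
    rw [if_neg]
    intro hc; exact hb (Finset.mem_image.mpr ⟨f ω, Finset.mem_univ _, hc⟩)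
  unfold entropyOf
  congr 1
  rw [← Finset.sum_subset (Finset.subset_univ (Finset.univ.image e))
      (fun b _ hb => by rw [hz b hb]; simp)]
  rw [Finset.sum_image (fun a _ a' _ h => he h)]
  exact Finset.sum_congr rfl fun a _ => by rw [key]

lemma mul_log_split (x y : ℝ) :
    x * y * Real.log (x * y) = x * y * Real.log x + x * y * Real.log y := by
  rcases eq_or_ne x 0 with h | h; · simp [h]
  rcases eq_or_ne y 0 with h' | h'; · simp [h']
  rw [Real.log_mul h h', mul_add]

lemma entropy_pair_chain {Ω α β : Type*} [Fintype Ω] [Fintype α] [Fintype β]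
    (p : Ω → ℝ) (V : Ω → α) (W : Ω → β) (w : α → β → ℝ)
    (hw : ∀ a b, pmfOf p (fun ω => (V ω, W ω)) (a, b) = pmfOf p V a * w a b)
    (hw1 : ∀ a, ∑ b, w a b = 1) :
    entropyOf p (fun ω => (V ω, W ω))
      = entropyOf p V - ∑ a, pmfOf p V a * (∑ b, w a b * Real.log (w a b)) := by
  unfold entropyOf
  rw [Fintype.sum_prod_type]
  have expand : ∀ a, (∑ b, pmfOf p (fun ω => (V ω, W ω)) (a, b)
        * Real.log (pmfOf p (fun ω => (V ω, W ω)) (a, b)))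
      = pmfOf p V a * Real.log (pmfOf p V a)
          + pmfOf p V a * ∑ b, w a b * Real.log (w a b) := by
    intro a
    calc ∑ b, pmfOf p (fun ω => (V ω, W ω)) (a, b)
          * Real.log (pmfOf p (fun ω => (V ω, W ω)) (a, b))
        = ∑ b, (pmfOf p V a * Real.log (pmfOf p V a) * w a b
            + pmfOf p V a * (w a b * Real.log (w a b))) := by
          refine Finset.sum_congr rfl fun b _ => ?_
          rw [hw a b, mul_log_split]
          ring
      _ = pmfOf p V a * Real.log (pmfOf p V a) * (∑ b, w a b)
            + pmfOf p V a * ∑ b, w a b * Real.log (w a b) := by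
          rw [Finset.sum_add_distrib, ← Finset.mul_sum, ← Finset.mul_sum]
      _ = pmfOf p V a * Real.log (pmfOf p V a)
            + pmfOf p V a * ∑ b, w a b * Real.log (w a b) := by
          rw [hw1 a, mul_one]
  simp only [expand]
  rw [Finset.sum_add_distrib]
  ring


set_option maxHeartbeats 2000000 in
/-- Let `K ≥ 1` and for each `k` let `𝒴 k` and `𝒰 k` be finite nonempty
types.  Let `(Y, U)` be random variables on a finite probability space whose joint pmf
factorizes as `P(Y = y, U = u) = P(Y = y) · ∏ₖ r k (u k) (y k)` with each `r k (·|yₖ)`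
a pmf on `𝒰 k` (conditionally on `Y k`, `U k` is independent of everything else).
Then for all subsets `B ⊆ A ⊆ {1, …, K}`:
`I(Y^A; U^A) = I(Y^{A∖B}; U^{A∖B} | U^B) + I(Y^B; U^B)`. -/
theorem stmt3 {Ω : Type*} [Fintype Ω]
    (K : ℕ) (hK : 1 ≤ K)
    (𝒴 𝒰 : Fin K → Type*)
    [∀ k, Fintype (𝒴 k)] [∀ k, Fintype (𝒰 k)]
    [∀ k, Nonempty (𝒴 k)] [∀ k, Nonempty (𝒰 k)]
    (p : Ω → ℝ) (hp0 : ∀ ω, 0 ≤ p ω) (hp1 : ∑ ω, p ω = 1)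
    (Y : ∀ k, Ω → 𝒴 k) (U : ∀ k, Ω → 𝒰 k)
    (r : ∀ k, 𝒰 k → 𝒴 k → ℝ)
    (hr0 : ∀ k u y, 0 ≤ r k u y) (hr1 : ∀ k y, ∑ u, r k u y = 1)
    (hfact : ∀ (y : ∀ k, 𝒴 k) (u : ∀ k, 𝒰 k),
      pmfOf p (fun ω => ((fun k => Y k ω), (fun k => U k ω))) (y, u)
        = pmfOf p (fun ω => fun k => Y k ω) y * ∏ k, r k (u k) (y k)) :
    ∀ A B : Finset (Fin K), B ⊆ A →
      miOf p (fun ω (k : {x // x ∈ A}) => Y k ω) (fun ω (k : {x // x ∈ A}) => U k ω)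
        = cmiOf p (fun ω (k : {x // x ∈ A \ B}) => Y k ω)
            (fun ω (k : {x // x ∈ A \ B}) => U k ω)
            (fun ω (k : {x // x ∈ B}) => U k ω)
          + miOf p (fun ω (k : {x // x ∈ B}) => Y k ω)
              (fun ω (k : {x // x ∈ B}) => U k ω) := by
  intro A B hBA
  classical
  have hDA : A \ B ⊆ A := Finset.sdiff_subset
  have hdisj : Disjoint (A \ B) B := Finset.sdiff_disjoint
  have hBB : B ⊆ B := subset_refl B
  have hDD : A \ B ⊆ A \ B := subset_refl (A \ B)
  -- normalization sums for the conditional kernels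
  have hsum1 : ∀ (S : Finset (Fin K)) (g : ∀ k : {x // x ∈ S}, 𝒴 k),
      ∑ b : (∀ k : {x // x ∈ S}, 𝒰 k), ∏ k : {x // x ∈ S}, r k (b k) (g k) = 1 := by
    intro S g
    refine Eq.trans (sum_pi_prod (fun k : {x // x ∈ S} => 𝒰 k.1)
        (fun k v => r k.1 v (g k))) ?_
    exact Finset.prod_eq_one fun k _ => hr1 k.1 (g k)
  -- the two "conditional entropy cost" quantities
  set CB : ℝ := ∑ ω, p ω * (∑ b : ∀ k : {x // x ∈ B}, 𝒰 k,
      (∏ k : {x // x ∈ B}, r k (b k) (Y k ω))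
        * Real.log (∏ k : {x // x ∈ B}, r k (b k) (Y k ω))) with hCB
  set CD : ℝ := ∑ ω, p ω * (∑ b : ∀ k : {x // x ∈ A \ B}, 𝒰 k,
      (∏ k : {x // x ∈ A \ B}, r k (b k) (Y k ω))
        * Real.log (∏ k : {x // x ∈ A \ B}, r k (b k) (Y k ω))) with hCD
  -- chain rule applications
  have app2 : entropyOf p (fun ω => ((fun k : {x // x ∈ A} => Y k ω),
        (fun k : {x // x ∈ B} => U k ω)))
      = entropyOf p (fun ω => fun k : {x // x ∈ A} => Y k ω) - CB := by
    refine (entropy_pair_chain p (fun ω => fun k : {x // x ∈ A} => Y k ω)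
        (fun ω => fun k : {x // x ∈ B} => U k ω)
        (fun a b => ∏ k : {x // x ∈ B}, r k (b k) (a ⟨k.1, hBA k.2⟩))
        (fun a b => keyP' p Y U r hr1 hfact A B hBA a b)
        (fun a => hsum1 B (fun k => a ⟨k.1, hBA k.2⟩))).trans ?_
    rw [hCB]
    congr 1
    exact sum_pmfOf_mul p (fun ω => fun k : {x // x ∈ A} => Y k ω)
      (fun a => ∑ b : ∀ k : {x // x ∈ B}, 𝒰 k,
        (∏ k : {x // x ∈ B}, r k (b k) (a ⟨k.1, hBA k.2⟩))
          * Real.log (∏ k : {x // x ∈ B}, r k (b k) (a ⟨k.1, hBA k.2⟩)))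
  have app4 : entropyOf p (fun ω => ((fun k : {x // x ∈ B} => Y k ω),
        (fun k : {x // x ∈ B} => U k ω)))
      = entropyOf p (fun ω => fun k : {x // x ∈ B} => Y k ω) - CB := by
    refine (entropy_pair_chain p (fun ω => fun k : {x // x ∈ B} => Y k ω)
        (fun ω => fun k : {x // x ∈ B} => U k ω)
        (fun a b => ∏ k : {x // x ∈ B}, r k (b k) (a ⟨k.1, hBB k.2⟩))
        (fun a b => keyP' p Y U r hr1 hfact B B hBB a b)
        (fun a => hsum1 B (fun k => a ⟨k.1, hBB k.2⟩))).trans ?_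
    rw [hCB]
    congr 1
    exact sum_pmfOf_mul p (fun ω => fun k : {x // x ∈ B} => Y k ω)
      (fun a => ∑ b : ∀ k : {x // x ∈ B}, 𝒰 k,
        (∏ k : {x // x ∈ B}, r k (b k) (a ⟨k.1, hBB k.2⟩))
          * Real.log (∏ k : {x // x ∈ B}, r k (b k) (a ⟨k.1, hBB k.2⟩)))
  have app1 : entropyOf p (fun ω => (((fun k : {x // x ∈ A} => Y k ω),
        (fun k : {x // x ∈ B} => U k ω)), (fun k : {x // x ∈ A \ B} => U k ω)))
      = entropyOf p (fun ω => ((fun k : {x // x ∈ A} => Y k ω),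
          (fun k : {x // x ∈ B} => U k ω))) - CD := by
    refine (entropy_pair_chain p
        (fun ω => ((fun k : {x // x ∈ A} => Y k ω), (fun k : {x // x ∈ B} => U k ω)))
        (fun ω => fun k : {x // x ∈ A \ B} => U k ω)
        (fun v b => ∏ k : {x // x ∈ A \ B}, r k (b k) (v.1 ⟨k.1, hDA k.2⟩))
        (fun v b => keyP2 p Y U r hr1 hfact A (A \ B) B hDA hdisj v.1 v.2 b)
        (fun v => hsum1 (A \ B) (fun k => v.1 ⟨k.1, hDA k.2⟩))).trans ?_
    rw [hCD]
    congr 1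
    exact sum_pmfOf_mul p
      (fun ω => ((fun k : {x // x ∈ A} => Y k ω), (fun k : {x // x ∈ B} => U k ω)))
      (fun v => ∑ b : ∀ k : {x // x ∈ A \ B}, 𝒰 k,
        (∏ k : {x // x ∈ A \ B}, r k (b k) (v.1 ⟨k.1, hDA k.2⟩))
          * Real.log (∏ k : {x // x ∈ A \ B}, r k (b k) (v.1 ⟨k.1, hDA k.2⟩)))
  have app3 : entropyOf p (fun ω => (((fun k : {x // x ∈ A \ B} => Y k ω),
        (fun k : {x // x ∈ B} => U k ω)), (fun k : {x // x ∈ A \ B} => U k ω)))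
      = entropyOf p (fun ω => ((fun k : {x // x ∈ A \ B} => Y k ω),
          (fun k : {x // x ∈ B} => U k ω))) - CD := by
    refine (entropy_pair_chain p
        (fun ω => ((fun k : {x // x ∈ A \ B} => Y k ω), (fun k : {x // x ∈ B} => U k ω)))
        (fun ω => fun k : {x // x ∈ A \ B} => U k ω)
        (fun v b => ∏ k : {x // x ∈ A \ B}, r k (b k) (v.1 ⟨k.1, hDD k.2⟩))
        (fun v b => keyP2 p Y U r hr1 hfact (A \ B) (A \ B) B hDD hdisj v.1 v.2 b)
        (fun v => hsum1 (A \ B) (fun k => v.1 ⟨k.1, hDD k.2⟩))).trans ?_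
    rw [hCD]
    congr 1
    exact sum_pmfOf_mul p
      (fun ω => ((fun k : {x // x ∈ A \ B} => Y k ω), (fun k : {x // x ∈ B} => U k ω)))
      (fun v => ∑ b : ∀ k : {x // x ∈ A \ B}, 𝒰 k,
        (∏ k : {x // x ∈ A \ B}, r k (b k) (v.1 ⟨k.1, hDD k.2⟩))
          * Real.log (∏ k : {x // x ∈ A \ B}, r k (b k) (v.1 ⟨k.1, hDD k.2⟩)))
  -- entropy invariance under injective recombinations
  have he1 : Function.Injective (fun x : ((∀ k : {v // v ∈ A}, 𝒴 k) × (∀ k : {v // v ∈ A}, 𝒰 k)) =>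
      ((x.1, fun k : {v // v ∈ B} => x.2 ⟨k.1, hBA k.2⟩),
        fun k : {v // v ∈ A \ B} => x.2 ⟨k.1, hDA k.2⟩)) := by
    intro x x' h
    have h1 : x.1 = x'.1 := congrArg (fun z => z.1.1) h
    have h2 := congrArg (fun z => z.1.2) h
    have h3 := congrArg (fun z => z.2) h
    refine Prod.ext h1 (funext fun k => ?_)
    by_cases hk : k.1 ∈ B
    · exact congrFun h2 ⟨k.1, hk⟩
    · exact congrFun h3 ⟨k.1, Finset.mem_sdiff.mpr ⟨k.2, hk⟩⟩
  have inv1 : entropyOf p (fun ω => (((fun k : {x // x ∈ A} => Y k ω),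
        (fun k : {x // x ∈ B} => U k ω)), (fun k : {x // x ∈ A \ B} => U k ω)))
      = entropyOf p (fun ω => ((fun k : {x // x ∈ A} => Y k ω),
          (fun k : {x // x ∈ A} => U k ω))) :=
    entropyOf_comp_injective p
      (fun ω => ((fun k : {x // x ∈ A} => Y k ω), (fun k : {x // x ∈ A} => U k ω)))
      _ he1
  have he2 : Function.Injective (fun u : (∀ k : {v // v ∈ A}, 𝒰 k) =>
      ((fun k : {v // v ∈ A \ B} => u ⟨k.1, hDA k.2⟩),
        (fun k : {v // v ∈ B} => u ⟨k.1, hBA k.2⟩))) := by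
    intro x x' h
    have h2 := congrArg (fun z => z.2) h
    have h3 := congrArg (fun z => z.1) h
    funext k
    by_cases hk : k.1 ∈ B
    · exact congrFun h2 ⟨k.1, hk⟩
    · exact congrFun h3 ⟨k.1, Finset.mem_sdiff.mpr ⟨k.2, hk⟩⟩
  have inv2 : entropyOf p (fun ω => ((fun k : {x // x ∈ A \ B} => U k ω),
        (fun k : {x // x ∈ B} => U k ω)))
      = entropyOf p (fun ω => fun k : {x // x ∈ A} => U k ω) :=
    entropyOf_comp_injective p (fun ω => fun k : {x // x ∈ A} => U k ω) _ he2
  have he3 : Function.Injective (fun x : ((∀ k : {v // v ∈ A \ B}, 𝒴 k) ×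
        ((∀ k : {v // v ∈ A \ B}, 𝒰 k) × (∀ k : {v // v ∈ B}, 𝒰 k))) =>
      ((x.1, x.2.2), x.2.1)) := by
    intro x x' h
    refine Prod.ext (congrArg (fun z => z.1.1) h)
      (Prod.ext (congrArg (fun z => z.2) h) (congrArg (fun z => z.1.2) h))
  have inv3 : entropyOf p (fun ω => (((fun k : {x // x ∈ A \ B} => Y k ω),
        (fun k : {x // x ∈ B} => U k ω)), (fun k : {x // x ∈ A \ B} => U k ω)))
      = entropyOf p (fun ω => ((fun k : {x // x ∈ A \ B} => Y k ω),
          ((fun k : {x // x ∈ A \ B} => U k ω), (fun k : {x // x ∈ B} => U k ω)))) :=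
    entropyOf_comp_injective p
      (fun ω => ((fun k : {x // x ∈ A \ B} => Y k ω),
        ((fun k : {x // x ∈ A \ B} => U k ω), (fun k : {x // x ∈ B} => U k ω)))) _ he3
  simp only [miOf, cmiOf]
  linarith [app1, app2, app3, app4, inv1, inv2, inv3]
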